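/- Let S be a ring of prime characteristic p and M an S[T; f]-module which is Artinian as an S-module. Then the descending chain of S-submodules {S·T^e M}_{e≥0} (the S-submodule generated by T^e M) stabilizes, and its stable value M* = ⋂_{e≥0} S T^e M satisfies S·T·M* = M* (i.e., M* is T-stable and T acts 'surjectively up to S-span' on M*). -/
import Mathlib

theorem stmt_12 {S M : Type*} [CommRing S] [AddCommGroup M] [Module S M] [IsArtinian S M]
    (p : ℕ) (hp : p.Prime) [CharP S p]
    (θ : M →+ M) (hθ : ∀ (s : S) (m : M), θ (s • m) = s ^ p • θ m) :
    (∃ e₀ : ℕ, ∀ e : ℕ, e₀ ≤ e →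
        Submodule.span S (Set.range (⇑θ)^[e]) = Submodule.span S (Set.range (⇑θ)^[e₀])) ∧
    Submodule.span S (⇑θ ''
        ((⨅ e : ℕ, Submodule.span S (Set.range (⇑θ)^[e]) : Submodule S M) : Set M)) =
      ⨅ e : ℕ, Submodule.span S (Set.range (⇑θ)^[e]) := by
  set N : ℕ → Submodule S M := fun e => Submodule.span S (Set.range (⇑θ)^[e]) with hN
  -- key: span of image of span equals span of image
  have hspan : ∀ e : ℕ, Submodule.span S (⇑θ '' (N e : Set M)) = N (e + 1) := by
    intro e
    have hR : Set.range (⇑θ)^[e + 1] = ⇑θ '' Set.range (⇑θ)^[e] := by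
      rw [Function.iterate_succ']
      exact (Set.range_comp _ _)
    have hNe : N (e + 1) = Submodule.span S (⇑θ '' Set.range (⇑θ)^[e]) := by
      simp only [hN]; rw [hR]
    apply le_antisymm
    · rw [Submodule.span_le]
      rintro _ ⟨m, hm, rfl⟩
      have : θ m ∈ Submodule.span S (⇑θ '' Set.range (⇑θ)^[e]) := by
        induction hm using Submodule.span_induction with
        | mem x hx => exact Submodule.subset_span ⟨x, hx, rfl⟩
        | zero => simp
        | add x y _ _ hx hy => rw [map_add]; exact Submodule.add_mem _ hx hy
        | smul s x _ hx => rw [hθ]; exact Submodule.smul_mem _ _ hx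
      rwa [hNe]
    · rw [hNe]
      exact Submodule.span_mono (Set.image_mono Submodule.subset_span)
  have hanti : Antitone N := by
    apply antitone_nat_of_succ_le
    intro e
    apply Submodule.span_mono
    rintro _ ⟨m, rfl⟩
    exact ⟨θ m, by rw [Function.iterate_succ]; rfl⟩
  -- stabilization via Artinian
  obtain ⟨e₀, he₀⟩ := IsArtinian.monotone_stabilizes (R := S) (M := M)
    ⟨fun e => OrderDual.toDual (N e), fun a b hab => hanti hab⟩
  have hstab : ∀ e, e₀ ≤ e → N e = N e₀ := fun e he => (he₀ e he).symm
  have hinf : (⨅ e : ℕ, N e) = N e₀ := by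
    apply le_antisymm (iInf_le _ e₀)
    apply le_iInf
    intro e
    rcases le_total e e₀ with h | h
    · exact hanti h
    · exact le_of_eq (hstab e h).symm
  refine ⟨⟨e₀, fun e he => hstab e he⟩, ?_⟩
  show Submodule.span S (⇑θ '' ((⨅ e : ℕ, N e : Submodule S M) : Set M)) = ⨅ e : ℕ, N e
  rw [hinf, hspan e₀, hstab (e₀ + 1) (Nat.le_succ e₀)]
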